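/- Let M ≥ 1 and D ≥ 1 be integers, η ∈ (0,1), ħ_1, …, ħ_M nonnegative reals, Ψ a probability distribution on {1, …, D}, and θ a real number. If Ω(x; ħ, Ψ) + θ·ln(1−x) ≥ 0 for all x ∈ [0, 1−η], then θ·(1−η) ≤ ∑_{r=1}^{M} r·ħ_r. -/

import Mathlib

/-- The regularized incomplete beta function with positive integer parameters `a`, `b`. -/
noncomputable def incBeta (a b : ℕ) (x : ℝ) : ℝ :=
  ∑ j ∈ Finset.Icc a (a + b - 1),
    (Nat.choose (a + b - 1) j : ℝ) * x ^ j * (1 - x) ^ (a + b - 1 - j)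

/-- `S_r(x; Ψ) = ∑_{d=r+1}^D d Ψ_d I_{d-r,r}(x) + ∑_{d=1}^{min(r,D)} d Ψ_d`. -/
noncomputable def Sfun (D r : ℕ) (Ψ : ℕ → ℝ) (x : ℝ) : ℝ :=
  (∑ d ∈ Finset.Icc (r + 1) D, (d : ℝ) * Ψ d * incBeta (d - r) r x) +
    ∑ d ∈ Finset.Icc 1 (min r D), (d : ℝ) * Ψ d

/-- `Ω(x; ħ, Ψ) = ∑_{r=1}^M ħ_r S_r(x; Ψ)`. -/
noncomputable def OmegaFun (M D : ℕ) (hb Ψ : ℕ → ℝ) (x : ℝ) : ℝ :=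
  ∑ r ∈ Finset.Icc 1 M, hb r * Sfun D r Ψ x

lemma incBeta_hasDerivAt (a b : ℕ) (ha : 1 ≤ a) (hbp : 1 ≤ b) (x : ℝ) :
    HasDerivAt (incBeta a b)
      ((a * Nat.choose (a + b - 1) a : ℕ) * (x ^ (a - 1) * (1 - x) ^ (b - 1))) x := by
  set n := a + b - 1 with hn
  have han : a ≤ n := by omega
  have hterm : ∀ j ∈ Finset.Icc a n,
      HasDerivAt (fun y : ℝ => (Nat.choose n j : ℝ) * y ^ j * (1 - y) ^ (n - j))
        ((Nat.choose n j : ℝ) * ((j : ℝ) * x ^ (j - 1) * (1 - x) ^ (n - j)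
          - x ^ j * ((n - j : ℕ) * (1 - x) ^ (n - j - 1)))) x := by
    intro j hj
    have h1 : HasDerivAt (fun y : ℝ => y ^ j) ((j : ℝ) * x ^ (j - 1)) x := hasDerivAt_pow j x
    have h2 : HasDerivAt (fun y : ℝ => (1 - y) ^ (n - j))
        (-(((n - j : ℕ) : ℝ) * (1 - x) ^ (n - j - 1))) x := by
      have := ((hasDerivAt_pow (n - j) (1 - x)).comp x
        ((hasDerivAt_const x (1:ℝ)).sub (hasDerivAt_id x)))
      simp at this; exact this
    have h3 : (fun y : ℝ => (Nat.choose n j : ℝ) * y ^ j * (1 - y) ^ (n - j)) =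
        fun y : ℝ => (Nat.choose n j : ℝ) * (y ^ j * (1 - y) ^ (n - j)) := by
      funext y; ring
    rw [h3]
    exact ((h1.mul h2).const_mul ((Nat.choose n j : ℝ))).congr_deriv (by ring)
  have hsum := HasDerivAt.fun_sum hterm
  refine hsum.congr_deriv ?_
  set t : ℕ → ℝ := fun k => ((Nat.choose n k * (n - k) : ℕ) : ℝ) * x ^ k * (1 - x) ^ (n - 1 - k)
    with ht
  have hsummand : ∀ j ∈ Finset.Icc a n,
      (Nat.choose n j : ℝ) * ((j : ℝ) * x ^ (j - 1) * (1 - x) ^ (n - j)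
        - x ^ j * ((n - j : ℕ) * (1 - x) ^ (n - j - 1))) = t (j - 1) - t j := by
    intro j hj
    simp only [Finset.mem_Icc] at hj
    obtain ⟨k, rfl⟩ : ∃ k, j = k + 1 := ⟨j - 1, by omega⟩
    have hc : Nat.choose n (k + 1) * (k + 1) = Nat.choose n k * (n - k) :=
      Nat.choose_succ_right_eq n k
    have e1 : n - 1 - k = n - (k + 1) := by omega
    have e2 : n - 1 - (k + 1) = n - (k + 1) - 1 := by omega
    simp only [ht]
    rw [Nat.add_sub_cancel, e1, e2, ← hc]
    push_cast
    ring
  rw [Finset.sum_congr rfl hsummand]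
  have hIcc : Finset.Icc a n = Finset.Ico a (n + 1) := by rw [Finset.Ico_add_one_right_eq_Icc]
  rw [hIcc, Finset.sum_Ico_eq_sum_range]
  have hre : ∀ i, t (a + i - 1) - t (a + i) = (fun m => t (a - 1 + m)) i
      - (fun m => t (a - 1 + m)) (i + 1) := by
    intro i
    have e1 : a + i - 1 = a - 1 + i := by omega
    have e2 : a + i = a - 1 + (i + 1) := by omega
    rw [e1, e2]
  calc ∑ i ∈ Finset.range (n + 1 - a), (t (a + i - 1) - t (a + i))
      = ∑ i ∈ Finset.range (n + 1 - a),
        ((fun m => t (a - 1 + m)) i - (fun m => t (a - 1 + m)) (i + 1)) := by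
        exact Finset.sum_congr rfl (fun i _ => hre i)
    _ = t (a - 1 + 0) - t (a - 1 + (n + 1 - a)) := Finset.sum_range_sub' _ _
    _ = t (a - 1) - t n := by rw [add_zero]; congr 2; omega
    _ = ((a * Nat.choose n a : ℕ) : ℝ) * (x ^ (a - 1) * (1 - x) ^ (b - 1)) := by
        have htn : t n = 0 := by simp [ht]
        have hc : Nat.choose n (a - 1) * (n - (a - 1)) = Nat.choose n a * a := by
          have h := Nat.choose_succ_right_eq n (a - 1)
          have e : a - 1 + 1 = a := by omega
          rw [e] at h; omega
        have he : n - 1 - (a - 1) = b - 1 := by omega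
        rw [htn, sub_zero, ht]
        simp only [hc, he]
        push_cast
        ring

lemma incBeta_continuous (a b : ℕ) : Continuous (incBeta a b) := by
  unfold incBeta
  exact continuous_finset_sum _ (fun j _ => by fun_prop)

lemma incBeta_zero (a b : ℕ) (ha : 1 ≤ a) : incBeta a b 0 = 0 := by
  unfold incBeta
  refine Finset.sum_eq_zero (fun j hj => ?_)
  simp only [Finset.mem_Icc] at hj
  rw [zero_pow (by omega)]
  ring

lemma incBeta_one (a b : ℕ) (hbp : 1 ≤ b) : incBeta a b 1 = 1 := by
  unfold incBeta
  rw [Finset.sum_eq_single (a + b - 1)]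
  · simp
  · intro j hj hne
    simp only [Finset.mem_Icc] at hj
    rw [sub_self, zero_pow (by omega)]
    ring
  · intro h
    exact absurd (Finset.mem_Icc.mpr ⟨by omega, le_refl _⟩) h

lemma incBeta_sub_eq_integral (a b : ℕ) (ha : 1 ≤ a) (hbp : 1 ≤ b) (u v : ℝ) :
    ∫ x in u..v, ((a * Nat.choose (a + b - 1) a : ℕ) : ℝ) * (x ^ (a - 1) * (1 - x) ^ (b - 1))
      = incBeta a b v - incBeta a b u := by
  refine intervalIntegral.integral_eq_sub_of_hasDerivAt
    (fun x _ => incBeta_hasDerivAt a b ha hbp x) ?_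
  exact (Continuous.intervalIntegrable (by fun_prop) _ _)

lemma integral_density (a b : ℕ) (ha : 1 ≤ a) (hbp : 1 ≤ b) :
    ∫ x in (0:ℝ)..1, ((a * Nat.choose (a + b - 1) a : ℕ) : ℝ)
      * (x ^ (a - 1) * (1 - x) ^ (b - 1)) = 1 := by
  rw [incBeta_sub_eq_integral a b ha hbp, incBeta_one a b hbp, incBeta_zero a b ha, sub_zero]

lemma integral_pow_mul_pow (j m : ℕ) :
    ∫ x in (0:ℝ)..1, x ^ j * (1 - x) ^ m
      = 1 / (((j + 1) * Nat.choose (j + m + 1) (j + 1) : ℕ) : ℝ) := by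
  have h := integral_density (j + 1) (m + 1) (by omega) (by omega)
  have e : j + 1 + (m + 1) - 1 = j + m + 1 := by omega
  rw [e] at h
  simp only [Nat.add_sub_cancel] at h
  rw [intervalIntegral.integral_const_mul] at h
  exact eq_one_div_of_mul_eq_one_left (by linarith)

lemma integral_incBeta (a b : ℕ) (ha : 1 ≤ a) (hbp : 1 ≤ b) :
    ∫ x in (0:ℝ)..1, incBeta a b x = (b : ℝ) / (a + b) := by
  unfold incBeta
  rw [intervalIntegral.integral_finset_sum
    (fun j _ => Continuous.intervalIntegrable (by fun_prop) _ _)]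
  have hterm : ∀ j ∈ Finset.Icc a (a + b - 1),
      (∫ x in (0:ℝ)..1, (Nat.choose (a + b - 1) j : ℝ) * x ^ j * (1 - x) ^ (a + b - 1 - j))
        = 1 / ((a + b : ℕ) : ℝ) := by
    intro j hj
    simp only [Finset.mem_Icc] at hj
    have hfe : (fun x : ℝ => (Nat.choose (a + b - 1) j : ℝ) * x ^ j * (1 - x) ^ (a + b - 1 - j))
        = fun x : ℝ => (Nat.choose (a + b - 1) j : ℝ) * (x ^ j * (1 - x) ^ (a + b - 1 - j)) := by
      funext x; ring
    rw [hfe, intervalIntegral.integral_const_mul, integral_pow_mul_pow]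
    have e : j + (a + b - 1 - j) + 1 = a + b := by omega
    rw [e]
    have hkey : (j + 1) * Nat.choose (a + b) (j + 1) = (a + b) * Nat.choose (a + b - 1) j := by
      have h := Nat.add_one_mul_choose_eq (a + b - 1) j
      have e2 : a + b - 1 + 1 = a + b := by omega
      rw [e2] at h
      rw [h]
      ring
    rw [hkey]
    have hc : (0:ℝ) < (Nat.choose (a + b - 1) j : ℝ) := by
      exact_mod_cast Nat.choose_pos (by omega)
    have hab : (0:ℝ) < ((a + b : ℕ) : ℝ) := by positivity
    push_cast
    push_cast at hc hab
    field_simp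
  rw [Finset.sum_congr rfl hterm, Finset.sum_const, Nat.card_Icc]
  have e : a + b - 1 + 1 - a = b := by omega
  rw [e]
  rw [nsmul_eq_mul]
  push_cast
  field_simp

lemma incBeta_mono (a b : ℕ) (ha : 1 ≤ a) (hbp : 1 ≤ b) {u v : ℝ}
    (hu : 0 ≤ u) (huv : u ≤ v) (hv : v ≤ 1) : incBeta a b u ≤ incBeta a b v := by
  have h := incBeta_sub_eq_integral a b ha hbp u v
  have hnn : 0 ≤ ∫ x in u..v,
      ((a * Nat.choose (a + b - 1) a : ℕ) : ℝ) * (x ^ (a - 1) * (1 - x) ^ (b - 1)) := by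
    refine intervalIntegral.integral_nonneg huv (fun x hx => ?_)
    simp only [Set.mem_Icc] at hx
    have hx0 : 0 ≤ x := le_trans hu hx.1
    have hx1 : x ≤ 1 := le_trans hx.2 hv
    have : (0:ℝ) ≤ 1 - x := by linarith
    positivity
  linarith [h ▸ hnn]

lemma Sfun_continuous (D r : ℕ) (Ψ : ℕ → ℝ) : Continuous (Sfun D r Ψ) := by
  unfold Sfun
  refine Continuous.add (continuous_finset_sum _ (fun d _ => ?_)) continuous_const
  exact (continuous_const.mul (incBeta_continuous (d - r) r))

lemma OmegaFun_continuous (M D : ℕ) (hb Ψ : ℕ → ℝ) : Continuous (OmegaFun M D hb Ψ) := by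
  unfold OmegaFun
  exact continuous_finset_sum _ (fun r _ => continuous_const.mul (Sfun_continuous D r Ψ))

lemma OmegaFun_mono (M D : ℕ) (hb Ψ : ℕ → ℝ) (hbnn : ∀ r ∈ Finset.Icc 1 M, 0 ≤ hb r)
    (hΨnn : ∀ d ∈ Finset.Icc 1 D, 0 ≤ Ψ d) {u v : ℝ}
    (hu : 0 ≤ u) (huv : u ≤ v) (hv : v ≤ 1) :
    OmegaFun M D hb Ψ u ≤ OmegaFun M D hb Ψ v := by
  unfold OmegaFun
  refine Finset.sum_le_sum (fun r hr => ?_)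
  simp only [Finset.mem_Icc] at hr
  refine mul_le_mul_of_nonneg_left ?_ (hbnn r (Finset.mem_Icc.mpr hr))
  unfold Sfun
  refine add_le_add_left (Finset.sum_le_sum (fun d hd => ?_)) _
  simp only [Finset.mem_Icc] at hd
  have hdnn : 0 ≤ (d : ℝ) * Ψ d := by
    have := hΨnn d (Finset.mem_Icc.mpr ⟨by omega, hd.2⟩)
    positivity
  exact mul_le_mul_of_nonneg_left
    (incBeta_mono (d - r) r (by omega) (by omega) hu huv hv) hdnn

lemma integral_Sfun (D r : ℕ) (hr : 1 ≤ r) (Ψ : ℕ → ℝ) :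
    ∫ x in (0:ℝ)..1, Sfun D r Ψ x
      = (∑ d ∈ Finset.Icc (r + 1) D, (r : ℝ) * Ψ d) +
        ∑ d ∈ Finset.Icc 1 (min r D), (d : ℝ) * Ψ d := by
  unfold Sfun
  rw [intervalIntegral.integral_add
    (Continuous.intervalIntegrable (continuous_finset_sum _
      (fun d _ => continuous_const.fun_mul (incBeta_continuous (d - r) r))) _ _)
    (intervalIntegrable_const)]
  rw [intervalIntegral.integral_const]
  simp only [smul_eq_mul, sub_zero, one_mul]
  congr 1
  rw [intervalIntegral.integral_finset_sum (fun d _ =>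
    Continuous.intervalIntegrable (continuous_const.fun_mul (incBeta_continuous (d - r) r)) _ _)]
  refine Finset.sum_congr rfl (fun d hd => ?_)
  simp only [Finset.mem_Icc] at hd
  rw [intervalIntegral.integral_const_mul, integral_incBeta (d - r) r (by omega) hr]
  have e : ((d - r : ℕ) : ℝ) + r = (d : ℝ) := by
    have : d - r + r = d := by omega
    exact_mod_cast congrArg (Nat.cast (R := ℝ)) this
  rw [e]
  have hd0 : (d : ℝ) ≠ 0 := by
    have : 0 < d := by omega
    positivity
  field_simp

theorem theta_upper_bound (M D : ℕ) (hM : 1 ≤ M) (hD : 1 ≤ D)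
    (η : ℝ) (hη0 : 0 < η) (hη1 : η < 1)
    (hb : ℕ → ℝ) (hbnn : ∀ r ∈ Finset.Icc 1 M, 0 ≤ hb r)
    (Ψ : ℕ → ℝ) (hΨnn : ∀ d ∈ Finset.Icc 1 D, 0 ≤ Ψ d)
    (hΨ1 : ∑ d ∈ Finset.Icc 1 D, Ψ d = 1) (θ : ℝ)
    (hcon : ∀ x ∈ Set.Icc (0:ℝ) (1 - η),
      OmegaFun M D hb Ψ x + θ * Real.log (1 - x) ≥ 0) :
    θ * (1 - η) ≤ ∑ r ∈ Finset.Icc 1 M, (r : ℝ) * hb r := by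
  set y : ℝ := 1 - η with hy
  have hy0 : 0 ≤ y := by simp [hy]; linarith
  have hy1 : y ≤ 1 := by simp [hy]; linarith
  have h1y : 1 - y = η := by simp [hy]
  set Ω := OmegaFun M D hb Ψ with hΩ
  have hΩc : Continuous Ω := OmegaFun_continuous M D hb Ψ
  -- Step 1 : ∫₀¹ Ω ≤ ∑ r hb r
  have step1 : ∫ x in (0:ℝ)..1, Ω x ≤ ∑ r ∈ Finset.Icc 1 M, (r : ℝ) * hb r := by
    rw [hΩ]
    unfold OmegaFun
    rw [intervalIntegral.integral_finset_sum (fun r _ =>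
      Continuous.intervalIntegrable (continuous_const.fun_mul (Sfun_continuous D r Ψ)) _ _)]
    refine Finset.sum_le_sum (fun r hr => ?_)
    simp only [Finset.mem_Icc] at hr
    rw [intervalIntegral.integral_const_mul, integral_Sfun D r hr.1 Ψ, mul_comm ((r:ℝ)) (hb r)]
    refine mul_le_mul_of_nonneg_left ?_ (hbnn r (Finset.mem_Icc.mpr hr))
    -- ∑_{d>r} r Ψ_d + ∑_{d ≤ min r D} d Ψ_d ≤ r
    have hsplit : (∑ d ∈ Finset.Icc 1 (min r D), Ψ d)
        + ∑ d ∈ Finset.Icc (r + 1) D, Ψ d = 1 := by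
      rw [← hΨ1]
      have e1 : Finset.Icc 1 (min r D) = Finset.Ioc 0 (min r D) := by
        ext k; simp; omega
      have e2 : Finset.Icc (r + 1) D = Finset.Ioc (min r D) D := by
        ext k; simp; omega
      have e3 : Finset.Icc 1 D = Finset.Ioc 0 D := by
        ext k; simp; omega
      rw [e1, e2, e3]
      exact Finset.sum_Ioc_consecutive _ (by omega) (by omega)
    have hb1 : ∑ d ∈ Finset.Icc (r + 1) D, (r : ℝ) * Ψ d
        ≤ (r : ℝ) * ∑ d ∈ Finset.Icc (r + 1) D, Ψ d := by
      rw [Finset.mul_sum]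
    have hb2 : ∑ d ∈ Finset.Icc 1 (min r D), (d : ℝ) * Ψ d
        ≤ (r : ℝ) * ∑ d ∈ Finset.Icc 1 (min r D), Ψ d := by
      rw [Finset.mul_sum]
      refine Finset.sum_le_sum (fun d hd => ?_)
      simp only [Finset.mem_Icc] at hd
      have hΨd : 0 ≤ Ψ d := hΨnn d (Finset.mem_Icc.mpr ⟨hd.1, by omega⟩)
      have hdr : (d : ℝ) ≤ (r : ℝ) := by exact_mod_cast (by omega : d ≤ r)
      exact mul_le_mul_of_nonneg_right hdr hΨd
    calc (∑ d ∈ Finset.Icc (r + 1) D, (r : ℝ) * Ψ d)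
          + ∑ d ∈ Finset.Icc 1 (min r D), (d : ℝ) * Ψ d
        ≤ (r : ℝ) * ∑ d ∈ Finset.Icc (r + 1) D, Ψ d
          + (r : ℝ) * ∑ d ∈ Finset.Icc 1 (min r D), Ψ d := by linarith
      _ = (r : ℝ) * ((∑ d ∈ Finset.Icc 1 (min r D), Ψ d)
          + ∑ d ∈ Finset.Icc (r + 1) D, Ψ d) := by ring
      _ = (r : ℝ) := by rw [hsplit, mul_one]
  -- split the integral
  have hadj : (∫ x in (0:ℝ)..y, Ω x) + ∫ x in y..1, Ω x = ∫ x in (0:ℝ)..1, Ω x :=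
    intervalIntegral.integral_add_adjacent_intervals
      (hΩc.intervalIntegrable _ _) (hΩc.intervalIntegrable _ _)
  -- Step 3 : θ * (y + η * log η) ≤ ∫₀^y Ω
  have hlogint : ∫ x in (0:ℝ)..y, Real.log (1 - x) = -(η * Real.log η) - 1 + η := by
    rw [intervalIntegral.integral_comp_sub_left (fun u => Real.log u) 1]
    rw [h1y, sub_zero]
    rw [integral_log]
    simp
  have hglcont : ContinuousOn (fun x : ℝ => -(θ * Real.log (1 - x))) (Set.Icc 0 y) := by
    refine ContinuousOn.neg (continuousOn_const.mul (ContinuousOn.log ?_ ?_))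
    · exact (continuousOn_const.sub continuousOn_id)
    · intro x hx
      simp only [Set.mem_Icc] at hx
      have hxy : x ≤ 1 - η := by rw [← hy]; exact hx.2
      have : η ≤ 1 - x := by linarith
      exact ne_of_gt (lt_of_lt_of_le hη0 this)
  have hglint : IntervalIntegrable (fun x : ℝ => -(θ * Real.log (1 - x)))
      MeasureTheory.volume 0 y := by
    have huicc : Set.uIcc (0:ℝ) y = Set.Icc 0 y := Set.uIcc_of_le hy0
    exact ContinuousOn.intervalIntegrable (huicc ▸ hglcont)
  have step3 : θ * (y + η * Real.log η) ≤ ∫ x in (0:ℝ)..y, Ω x := by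
    have hmono := intervalIntegral.integral_mono_on hy0 hglint
      (hΩc.intervalIntegrable 0 y) (fun x hx => by
        have := hcon x hx; linarith)
    have hval : ∫ x in (0:ℝ)..y, -(θ * Real.log (1 - x))
        = θ * (y + η * Real.log η) := by
      have : (fun x : ℝ => -(θ * Real.log (1 - x)))
          = fun x : ℝ => (-θ) * Real.log (1 - x) := by funext x; ring
      rw [this, intervalIntegral.integral_const_mul, hlogint, hy]
      ring
    linarith [hval ▸ hmono]
  -- Step 4 : η * Ω y ≤ ∫_y^1 Ω
  have step4 : η * Ω y ≤ ∫ x in y..1, Ω x := by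
    have hmono := intervalIntegral.integral_mono_on hy1
      (intervalIntegrable_const (c := Ω y) (μ := MeasureTheory.volume) (a := y) (b := 1)) (hΩc.intervalIntegrable y 1)
      (fun x hx => by
        simp only [Set.mem_Icc] at hx
        exact OmegaFun_mono M D hb Ψ hbnn hΨnn hy0 hx.1 hx.2)
    rw [intervalIntegral.integral_const, smul_eq_mul, h1y] at hmono
    exact hmono
  -- Step 5 : constraint at y
  have step5 : -(θ * Real.log η) ≤ Ω y := by
    have := hcon y (Set.mem_Icc.mpr ⟨hy0, by rw [hy]⟩)
    rw [h1y] at this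
    linarith
  -- combine
  have hη' : 0 ≤ η := le_of_lt hη0
  have h4' : η * (-(θ * Real.log η)) ≤ η * Ω y := by
    exact mul_le_mul_of_nonneg_left step5 hη'
  have key : θ * (y + η * Real.log η) + η * (-(θ * Real.log η)) = θ * y := by ring
  linarith
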